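/- Fix 0 < p < ∞ and for 0 < ε < 1 define N_p(ε) = ((1/2π) ∫_{-π}^{π} |1 - ε e^{iθ}|^{-p} dθ)^{1/p}. Then N_p(ε) = 1 + (p/4) ε² + O(ε⁴) as ε → 0⁺; that is, the function ε ↦ N_p(ε) - 1 - (p/4)ε² is O(ε⁴) as ε → 0⁺. -/

import Mathlib

open Complex Asymptotics Finset Set Real intervalIntegral

/-- coefficients of the binomial series of `(1-u)^(-m)`. -/
noncomputable def bc (m : ℝ) (j : ℕ) : ℝ := (∏ i ∈ Finset.range j, (m + i)) / j.factorial

/-- partial sums. -/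
noncomputable def Sm (m : ℝ) (k : ℕ) (u : ℝ) : ℝ := ∑ j ∈ Finset.range (k+1), bc m j * u^j

lemma bc_zero (m : ℝ) : bc m 0 = 1 := by simp [bc]

lemma bc_succ_mul (m : ℝ) (j : ℕ) : ((j:ℝ)+1) * bc m (j+1) = m * bc (m+1) j := by
  have h1 : (∏ i ∈ Finset.range (j+1), (m + i)) = (∏ i ∈ Finset.range j, (m + 1 + i)) * m := by
    rw [Finset.prod_range_succ']
    push_cast
    ring_nf
  have h2 : ((j+1).factorial : ℝ) = ((j:ℝ)+1) * j.factorial := by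
    rw [Nat.factorial_succ]; push_cast; ring
  have h3 : (j.factorial : ℝ) ≠ 0 := Nat.cast_ne_zero.2 j.factorial_ne_zero
  simp only [bc]
  rw [h1, h2]
  field_simp

lemma Sm_zero_u (m : ℝ) (k : ℕ) : Sm m k 0 = 1 := by
  rw [Sm, Finset.sum_eq_single 0]
  · simp [bc_zero]
  · intro j _ hj; simp [zero_pow hj]
  · simp

lemma hasDerivAt_Sm (m : ℝ) (k : ℕ) (u : ℝ) :
    HasDerivAt (Sm m (k+1)) (m * Sm (m+1) k u) u := by
  have h : ∀ j ∈ Finset.range (k+2), HasDerivAt (fun x : ℝ => bc m j * x^j)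
      (bc m j * (j * u^(j-1))) u := by
    intro j _
    exact (hasDerivAt_pow j u).const_mul _
  have := HasDerivAt.fun_sum h
  refine this.congr_deriv (Eq.symm ?_)
  rw [Finset.sum_range_succ']
  simp only [Nat.cast_zero, pow_zero, Nat.zero_sub, zero_mul, mul_zero, add_zero]
  rw [Sm, Finset.mul_sum]
  refine Finset.sum_congr rfl fun j _ => ?_
  have hb := bc_succ_mul m j
  have : j + 1 - 1 = j := rfl
  rw [this]
  push_cast
  calc m * (bc (m+1) j * u^j) = (m * bc (m+1) j) * u^j := by ring
    _ = bc m (j+1) * ((↑j+1) * u^j) := by rw [← hb]; ring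

lemma rpow_base_bound {b : ℝ} (a : ℝ) (hb1 : 1/2 ≤ b) (hb2 : b ≤ 2) :
    b ^ a ≤ 2 ^ |a| := by
  rcases le_or_gt 0 a with ha | ha
  · rw [_root_.abs_of_nonneg ha]
    exact Real.rpow_le_rpow (by linarith) hb2 ha
  · rw [_root_.abs_of_neg ha]
    calc b ^ a ≤ (1/2 : ℝ) ^ a :=
          Real.rpow_le_rpow_of_nonpos (by norm_num) hb1 ha.le
      _ = 2 ^ (-a) := by
          rw [show (1/2 : ℝ) = 2⁻¹ by norm_num, ← Real.rpow_neg_one (2:ℝ),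
            ← Real.rpow_mul (by norm_num : (0:ℝ) ≤ 2)]
          norm_num

lemma hasDerivAt_one_sub_rpow (m x : ℝ) (hx : (1:ℝ) - x ≠ 0) :
    HasDerivAt (fun y : ℝ => (1-y) ^ (-m)) (m * (1-x) ^ (-(m+1))) x := by
  have h1 : HasDerivAt (fun y : ℝ => 1 - y) (-1) x := by
    simpa using (hasDerivAt_id x).const_sub 1
  have h2 := (Real.hasDerivAt_rpow_const (p := -m) (Or.inl hx)).comp x h1
  refine h2.congr_deriv (Eq.symm ?_)
  ring_nf

lemma taylor_bound (k : ℕ) : ∀ m : ℝ, ∃ C : ℝ, 0 ≤ C ∧ ∀ u : ℝ, |u| ≤ 1/2 →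
    |(1-u) ^ (-m) - Sm m k u| ≤ C * |u|^(k+1) := by
  induction k with
  | zero =>
    intro m
    refine ⟨|m| * 2 ^ |m+1|, by positivity, fun u hu => ?_⟩
    have hS : Sm m 0 u = 1 := by simp [Sm, bc_zero]
    rw [hS]
    have key : ∀ x ∈ Set.Icc (-(1/2):ℝ) (1/2),
        HasDerivWithinAt (fun y : ℝ => (1-y) ^ (-m)) (m * (1-x) ^ (-(m+1)))
          (Set.Icc (-(1/2):ℝ) (1/2)) x := by
      intro x hx
      exact (hasDerivAt_one_sub_rpow m x (by rcases hx with ⟨h1, h2⟩; intro h; linarith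
        )).hasDerivWithinAt
    have bound : ∀ x ∈ Set.Icc (-(1/2):ℝ) (1/2),
        ‖m * (1-x) ^ (-(m+1))‖ ≤ |m| * 2 ^ |m+1| := by
      intro x hx
      rcases hx with ⟨h1, h2⟩
      rw [Real.norm_eq_abs, abs_mul]
      gcongr
      rw [_root_.abs_of_nonneg (Real.rpow_nonneg (by linarith) _)]
      calc (1-x) ^ (-(m+1)) ≤ 2 ^ |(-(m+1))| := rpow_base_bound _ (by linarith) (by linarith)
        _ = 2 ^ |m+1| := by rw [abs_neg]
      
    have hmem : u ∈ Set.Icc (-(1/2):ℝ) (1/2) := abs_le.mp hu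
    have h0 : (0:ℝ) ∈ Set.Icc (-(1/2):ℝ) (1/2) := by norm_num
    have := (convex_Icc _ _).norm_image_sub_le_of_norm_hasDerivWithin_le key bound h0 hmem
    simpa [Real.one_rpow] using this
  | succ k ih =>
    intro m
    obtain ⟨C', hC'0, hC'⟩ := ih (m+1)
    refine ⟨|m| * C', by positivity, fun u hu => ?_⟩
    set s : Set ℝ := Set.Icc (-|u|) |u| with hs
    have hsub : s ⊆ Set.Icc (-(1/2):ℝ) (1/2) :=
      Set.Icc_subset_Icc (by linarith) hu
    have key : ∀ x ∈ s,
        HasDerivWithinAt (fun y : ℝ => (1-y) ^ (-m) - Sm m (k+1) y)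
          (m * ((1-x) ^ (-(m+1)) - Sm (m+1) k x)) s x := by
      intro x hx
      have hx' := hsub hx
      have h1 : (1:ℝ) - x ≠ 0 := by rcases hx' with ⟨a, b⟩; intro h; linarith
      have := (hasDerivAt_one_sub_rpow m x h1).sub (hasDerivAt_Sm m k x)
      refine this.hasDerivWithinAt.congr_deriv (Eq.symm ?_)
      ring
    have bound : ∀ x ∈ s,
        ‖m * ((1-x) ^ (-(m+1)) - Sm (m+1) k x)‖ ≤ |m| * (C' * |u|^(k+1)) := by
      intro x hx
      have hx' := hsub hx
      have hxu : |x| ≤ |u| := abs_le.mpr hx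
      rw [Real.norm_eq_abs, abs_mul]
      gcongr
      calc |(1-x) ^ (-(m+1)) - Sm (m+1) k x| ≤ C' * |x|^(k+1) :=
            hC' x (abs_le.mpr hx')
        _ ≤ C' * |u|^(k+1) := by gcongr
    have hmem : u ∈ s := by constructor <;> [linarith [neg_abs_le u]; exact le_abs_self u]
    have h0 : (0:ℝ) ∈ s := by constructor <;> simp [abs_nonneg]
    have := (convex_Icc _ _).norm_image_sub_le_of_norm_hasDerivWithin_le key bound h0 hmem
    have hF0 : (1-(0:ℝ)) ^ (-m) - Sm m (k+1) 0 = 0 := by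
      rw [Sm_zero_u]; simp [Real.one_rpow]
    rw [hF0, sub_zero, sub_zero, Real.norm_eq_abs, Real.norm_eq_abs] at this
    calc |(1-u) ^ (-m) - Sm m (k+1) u| ≤ |m| * (C' * |u|^(k+1)) * |u| := this
      _ = |m| * C' * |u|^(k+1+1) := by rw [pow_succ]; ring

lemma norm_sq_one_sub_eps (ε θ : ℝ) :
    ‖1 - (ε : ℂ) * Complex.exp ((θ : ℂ) * Complex.I)‖ ^ (2:ℕ) =
      1 - 2*ε*Real.cos θ + ε^2 := by
  rw [← Complex.normSq_eq_norm_sq]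
  have : (1 - (ε : ℂ) * Complex.exp ((θ : ℂ) * Complex.I)) =
      Complex.mk (1 - ε * Real.cos θ) (-(ε * Real.sin θ)) := by
    rw [Complex.exp_mul_I]
    apply Complex.ext <;> simp [Complex.cos_ofReal_re, Complex.sin_ofReal_re]
  rw [this, Complex.normSq_mk]
  nlinarith [Real.sin_sq_add_cos_sq θ]

lemma base_pos {ε : ℝ} (hε0 : 0 < ε) (hε1 : ε < 1) (θ : ℝ) :
    (0:ℝ) < 1 - (2*ε*Real.cos θ - ε^2) := by
  nlinarith [Real.neg_one_le_cos θ, Real.cos_le_one θ]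

lemma integrand_eq {p ε : ℝ} (hε0 : 0 < ε) (hε1 : ε < 1) (θ : ℝ) :
    ‖1 - (ε : ℂ) * Complex.exp ((θ : ℂ) * Complex.I)‖ ^ (-p) =
      (1 - (2*ε*Real.cos θ - ε^2)) ^ (-(p/2)) := by
  set x := ‖1 - (ε : ℂ) * Complex.exp ((θ : ℂ) * Complex.I)‖ with hx
  have hx2 : x ^ (2:ℕ) = 1 - (2*ε*Real.cos θ - ε^2) := by
    rw [norm_sq_one_sub_eps]; ring
  have hxpos : 0 < x := by
    have := base_pos hε0 hε1 θ
    nlinarith [norm_nonneg (1 - (ε : ℂ) * Complex.exp ((θ : ℂ) * Complex.I))]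
  rw [← hx2, ← Real.rpow_natCast x 2, ← Real.rpow_mul hxpos.le]
  ring_nf

lemma int_cos1 : ∫ θ in (-Real.pi)..Real.pi, Real.cos θ = 0 := by
  rw [integral_cos]; simp

lemma int_cos2 : ∫ θ in (-Real.pi)..Real.pi, Real.cos θ ^ 2 = Real.pi := by
  rw [integral_cos_sq]
  simp [Real.cos_pi, Real.sin_pi]

lemma int_cos3 : ∫ θ in (-Real.pi)..Real.pi, Real.cos θ ^ 3 = 0 := by
  have h : ∀ x ∈ Set.uIcc (-Real.pi) Real.pi,
      HasDerivAt (fun θ : ℝ => Real.sin θ - Real.sin θ ^ 3 / 3) (Real.cos x ^ 3) x := by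
    intro x _
    have h1 := Real.hasDerivAt_sin x
    have h2 := ((Real.hasDerivAt_sin x).pow 3).div_const 3
    have := h1.sub h2
    refine this.congr_deriv (Eq.symm ?_)
    have hs := Real.sin_sq_add_cos_sq x
    push_cast
    field_simp
    linear_combination (Real.cos x) * hs
  rw [intervalIntegral.integral_eq_sub_of_hasDerivAt h
    (Continuous.intervalIntegrable (by continuity) _ _)]
  simp [Real.sin_pi]

lemma Sm_three (q u : ℝ) :
    Sm q 3 u = 1 + q*u + q*(q+1)/2*u^2 + q*(q+1)*(q+2)/6*u^3 := by
  simp [Sm, bc, Finset.sum_range_succ, Finset.prod_range_succ, Nat.factorial]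
  try ring

lemma Sm_one (m u : ℝ) : Sm m 1 u = 1 + m*u := by
  simp [Sm, bc, Finset.sum_range_succ, Finset.prod_range_succ, Nat.factorial]

lemma inner_est (p : ℝ) (hp : 0 < p) : ∃ K : ℝ, 0 ≤ K ∧ ∀ ε : ℝ, 0 < ε → ε ≤ 1/8 →
    |(1 / (2 * Real.pi)) * (∫ θ in (-Real.pi)..Real.pi,
      ‖1 - (ε : ℂ) * Complex.exp ((θ : ℂ) * Complex.I)‖ ^ (-p)) - 1 - p^2/4 * ε^2|
      ≤ K * ε^4 := by
  obtain ⟨C3, hC30, hC3⟩ := taylor_bound 3 (p/2)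
  set q := p/2 with hq
  refine ⟨|q*(q+1)/2 - q*(q+1)*(q+2)| + |q*(q+1)*(q+2)/6| + 81*C3, by positivity,
    fun ε hε0 hε8 => ?_⟩
  have hε1 : ε < 1 := lt_of_le_of_lt hε8 (by norm_num)
  have hπ : (0:ℝ) < Real.pi := Real.pi_pos
  set u : ℝ → ℝ := fun θ => 2*ε*Real.cos θ - ε^2 with hu_def
  have hu3 : ∀ θ, |u θ| ≤ 3*ε := by
    intro θ
    have hu : u θ = 2*ε*Real.cos θ - ε^2 := rfl
    rw [hu, abs_le]
    constructor <;> nlinarith [Real.neg_one_le_cos θ, Real.cos_le_one θ]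
  have huhalf : ∀ θ, |u θ| ≤ 1/2 := fun θ => (hu3 θ).trans (by linarith)
  set g : ℝ → ℝ := fun θ => (1 - u θ) ^ (-q) with hg_def
  set P : ℝ → ℝ := fun θ => Sm q 3 (u θ) with hP_def
  set A : ℝ := 1 - q*ε^2 + (q*(q+1)/2)*ε^4 - (q*(q+1)*(q+2)/6)*ε^6 with hA
  set B : ℝ := 2*q*ε - 4*(q*(q+1)/2)*ε^3 + 6*(q*(q+1)*(q+2)/6)*ε^5 with hB
  set C : ℝ := 4*(q*(q+1)/2)*ε^2 - 12*(q*(q+1)*(q+2)/6)*ε^4 with hC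
  set D : ℝ := 8*(q*(q+1)*(q+2)/6)*ε^3 with hD
  have hpoint : ∀ θ : ℝ, P θ = A + B*Real.cos θ + C*Real.cos θ^2 + D*Real.cos θ^3 := by
    intro θ
    rw [hP_def]
    simp only [Sm_three, hu_def, hA, hB, hC, hD]
    ring
  -- continuity
  have hg_cont : Continuous g := by
    apply Continuous.rpow_const
    · fun_prop
    · intro θ
      exact Or.inl (ne_of_gt (by simpa [hu_def] using base_pos hε0 hε1 θ))
  have hP_cont : Continuous P := by
    have : P = fun θ => A + B*Real.cos θ + C*Real.cos θ^2 + D*Real.cos θ^3 :=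
      funext hpoint
    rw [this]; fun_prop
  -- the original integrand equals g
  have hcongr : (∫ θ in (-Real.pi)..Real.pi,
        ‖1 - (ε : ℂ) * Complex.exp ((θ : ℂ) * Complex.I)‖ ^ (-p))
      = ∫ θ in (-Real.pi)..Real.pi, g θ := by
    apply intervalIntegral.integral_congr
    intro θ _
    simpa [hg_def, hu_def, hq] using integrand_eq hε0 hε1 θ
  -- split off the polynomial
  have hsplit : (∫ θ in (-Real.pi)..Real.pi, g θ)
      = (∫ θ in (-Real.pi)..Real.pi, P θ) + ∫ θ in (-Real.pi)..Real.pi, (g θ - P θ) := by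
    rw [← intervalIntegral.integral_add (g := fun θ => g θ - P θ) (hP_cont.intervalIntegrable _ _)
      ((hg_cont.sub hP_cont).intervalIntegrable _ _)]
    congr 1; funext θ; ring
  -- integral of the polynomial
  have hIP : (∫ θ in (-Real.pi)..Real.pi, P θ) = A*(2*Real.pi) + C*Real.pi := by
    have e0 : (∫ θ in (-Real.pi)..Real.pi, P θ)
        = ∫ θ in (-Real.pi)..Real.pi,
            (A + B*Real.cos θ + C*Real.cos θ^2 + D*Real.cos θ^3) :=
      intervalIntegral.integral_congr (fun θ _ => hpoint θ)
    have i1 : IntervalIntegrable (fun _ : ℝ => A) MeasureTheory.volume (-Real.pi) Real.pi :=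
      intervalIntegrable_const
    have i2 : IntervalIntegrable (fun θ : ℝ => B*Real.cos θ) MeasureTheory.volume
        (-Real.pi) Real.pi := (Continuous.intervalIntegrable (by fun_prop) _ _)
    have i3 : IntervalIntegrable (fun θ : ℝ => C*Real.cos θ^2) MeasureTheory.volume
        (-Real.pi) Real.pi := (Continuous.intervalIntegrable (by fun_prop) _ _)
    have i4 : IntervalIntegrable (fun θ : ℝ => D*Real.cos θ^3) MeasureTheory.volume
        (-Real.pi) Real.pi := (Continuous.intervalIntegrable (by fun_prop) _ _)
    rw [e0, intervalIntegral.integral_add ((i1.add i2).add i3) i4,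
      intervalIntegral.integral_add (i1.add i2) i3,
      intervalIntegral.integral_add i1 i2,
      intervalIntegral.integral_const,
      intervalIntegral.integral_const_mul, intervalIntegral.integral_const_mul,
      intervalIntegral.integral_const_mul, int_cos1, int_cos2, int_cos3]
    try simp
    try ring
  -- remainder bound
  have hrem : ‖∫ θ in (-Real.pi)..Real.pi, (g θ - P θ)‖
      ≤ 81*C3*ε^4 * |Real.pi - (-Real.pi)| := by
    apply intervalIntegral.norm_integral_le_of_norm_le_const
    intro θ _
    have h1 : |g θ - P θ| ≤ C3 * |u θ|^4 := hC3 (u θ) (huhalf θ)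
    have h2 : |u θ|^4 ≤ (3*ε)^4 := by
      apply pow_le_pow_left₀ (abs_nonneg _) (hu3 θ)
    rw [Real.norm_eq_abs]
    calc |g θ - P θ| ≤ C3 * |u θ|^4 := h1
      _ ≤ C3 * (3*ε)^4 := by gcongr
      _ = 81*C3*ε^4 := by ring
  rw [hcongr, hsplit, hIP]
  have hπabs : |Real.pi - (-Real.pi)| = 2*Real.pi := by
    rw [_root_.abs_of_pos (by linarith)]; ring
  rw [hπabs] at hrem
  set R := ∫ θ in (-Real.pi)..Real.pi, (g θ - P θ) with hR
  have hmain : (1 / (2*Real.pi)) * (A*(2*Real.pi) + C*Real.pi + R) - 1 - p^2/4*ε^2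
      = (q*(q+1)/2 - q*(q+1)*(q+2))*ε^4 - (q*(q+1)*(q+2)/6)*ε^6
        + (1/(2*Real.pi)) * R := by
    have hπ' : Real.pi ≠ 0 := ne_of_gt hπ
    have step1 : (1 / (2*Real.pi)) * (A*(2*Real.pi) + C*Real.pi + R)
        = A + C/2 + (1/(2*Real.pi)) * R := by
      field_simp
    rw [step1, hA, hC, hq]
    ring
  rw [hmain]
  have hRbound : |(1/(2*Real.pi)) * R| ≤ 81*C3*ε^4 := by
    rw [abs_mul, _root_.abs_of_pos (by positivity : (0:ℝ) < 1/(2*Real.pi))]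
    rw [Real.norm_eq_abs] at hrem
    calc (1/(2*Real.pi)) * |R| ≤ (1/(2*Real.pi)) * (81*C3*ε^4 * (2*Real.pi)) := by
          gcongr
      _ = 81*C3*ε^4 := by field_simp
  have hε6 : ε^6 ≤ ε^4 := pow_le_pow_of_le_one hε0.le hε1.le (by norm_num)
  calc |(q*(q+1)/2 - q*(q+1)*(q+2))*ε^4 - (q*(q+1)*(q+2)/6)*ε^6 + (1/(2*Real.pi)) * R|
      ≤ |(q*(q+1)/2 - q*(q+1)*(q+2))*ε^4| + |(q*(q+1)*(q+2)/6)*ε^6|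
        + |(1/(2*Real.pi)) * R| := by
        apply (abs_add_le _ _).trans
        gcongr
        exact abs_sub _ _
    _ ≤ |q*(q+1)/2 - q*(q+1)*(q+2)| * ε^4 + |q*(q+1)*(q+2)/6| * ε^4 + 81*C3*ε^4 := by
        have e4 : |(q*(q+1)/2 - q*(q+1)*(q+2))*ε^4| = |q*(q+1)/2 - q*(q+1)*(q+2)| * ε^4 := by
          rw [abs_mul, _root_.abs_of_pos (by positivity : (0:ℝ) < ε^4)]
        have e6 : |(q*(q+1)*(q+2)/6)*ε^6| = |q*(q+1)*(q+2)/6| * ε^6 := by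
          rw [abs_mul, _root_.abs_of_pos (by positivity : (0:ℝ) < ε^6)]
        rw [e4, e6]
        have h6 : |q*(q+1)*(q+2)/6| * ε^6 ≤ |q*(q+1)*(q+2)/6| * ε^4 := by
          gcongr
        linarith [hRbound]
    _ = (|q*(q+1)/2 - q*(q+1)*(q+2)| + |q*(q+1)*(q+2)/6| + 81*C3) * ε^4 := by ring

/-- The `H^p(𝕋)` norm of `z ↦ (1 - εz)⁻¹`. -/
noncomputable def Np (p : ℝ) (ε : ℝ) : ℝ :=
  ((1 / (2 * Real.pi)) * ∫ θ in (-Real.pi)..Real.pi,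
      ‖1 - (ε : ℂ) * Complex.exp ((θ : ℂ) * Complex.I)‖ ^ (-p)) ^ (1 / p)

/-- `N_p(ε) = 1 + (p/4)ε² + O(ε⁴)` as `ε → 0⁺`. -/
theorem np_expansion (p : ℝ) (hp : 0 < p) :
    (fun ε : ℝ => Np p ε - 1 - (p / 4) * ε ^ 2) =O[nhdsWithin 0 (Set.Ioi 0)]
      fun ε : ℝ => ε ^ 4 := by
  obtain ⟨K, hK0, hK⟩ := inner_est p hp
  obtain ⟨C1, hC10, hC1⟩ := taylor_bound 1 (-(1/p))
  set M : ℝ := p^2/4 + K with hM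
  have hM0 : 0 < M := by positivity
  set δ : ℝ := min (1/8) (1/(1+2*M)) with hδ
  have hδ0 : 0 < δ := lt_min (by norm_num) (by positivity)
  rw [Asymptotics.isBigO_iff]
  refine ⟨C1 * M^2 + K/p, ?_⟩
  filter_upwards [Ioc_mem_nhdsGT hδ0] with ε hε
  obtain ⟨hε0, hεδ⟩ := hε
  have hε8 : ε ≤ 1/8 := hεδ.trans (min_le_left _ _)
  have hε1 : ε < 1 := lt_of_le_of_lt hε8 (by norm_num)
  have hεM : ε ≤ 1/(1+2*M) := hεδ.trans (min_le_right _ _)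
  set I : ℝ := (1 / (2 * Real.pi)) * ∫ θ in (-Real.pi)..Real.pi,
      ‖1 - (ε : ℂ) * Complex.exp ((θ : ℂ) * Complex.I)‖ ^ (-p) with hI
  set t : ℝ := I - 1 with ht
  have hKe := hK ε hε0 hε8
  have htb : |t - p^2/4 * ε^2| ≤ K * ε^4 := by
    simpa [ht, hI, sub_sub] using hKe
  have hε4 : ε^4 ≤ ε^2 := pow_le_pow_of_le_one hε0.le hε1.le (by norm_num)
  have htM : |t| ≤ M * ε^2 := by
    calc |t| = |(t - p^2/4 * ε^2) + p^2/4 * ε^2| := by ring_nf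
      _ ≤ |t - p^2/4 * ε^2| + |p^2/4 * ε^2| := abs_add_le _ _
      _ ≤ K * ε^4 + p^2/4 * ε^2 := by
          gcongr
          rw [_root_.abs_of_nonneg (by positivity)]
      _ ≤ K * ε^2 + p^2/4 * ε^2 := by gcongr
      _ = M * ε^2 := by rw [hM]; ring
  have hthalf : |t| ≤ 1/2 := by
    have hε2 : ε^2 ≤ ε := by
      calc ε^2 ≤ ε^1 := pow_le_pow_of_le_one hε0.le hε1.le (by norm_num)
        _ = ε := pow_one ε
    have h1 : M * ε^2 ≤ M * ε := by gcongr
    have h2 : M * ε ≤ M / (1+2*M) := by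
      rw [div_eq_mul_inv]
      gcongr
      rw [← one_div]
      exact hεM
    have h3 : M / (1+2*M) ≤ 1/2 := by
      rw [div_le_div_iff₀ (by positivity) (by norm_num)]
      linarith
    calc |t| ≤ M*ε^2 := htM
      _ ≤ M*ε := h1
      _ ≤ M/(1+2*M) := h2
      _ ≤ 1/2 := h3
  have hNp : Np p ε = (1 - (-t)) ^ (-(-(1/p))) := by
    rw [Np, ← hI]
    congr 1
    · rw [ht]; ring
    · ring
  have hC1t := hC1 (-t) (by rwa [abs_neg])
  rw [Sm_one] at hC1t
  have habs : |(1 - (-t)) ^ (-(-(1/p))) - (1 + -(1/p) * -t)| ≤ C1 * |t|^2 := by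
    rwa [abs_neg] at hC1t
  have hsimp : (1 + -(1/p) * -t) = 1 + t/p := by ring
  rw [hsimp] at habs
  rw [Real.norm_eq_abs, Real.norm_eq_abs, hNp]
  have step : |(1 - (-t)) ^ (-(-(1/p))) - 1 - p/4 * ε^2|
      ≤ C1 * |t|^2 + |t/p - p/4*ε^2| := by
    calc |(1 - (-t)) ^ (-(-(1/p))) - 1 - p/4 * ε^2|
        = |((1 - (-t)) ^ (-(-(1/p))) - (1 + t/p)) + (t/p - p/4*ε^2)| := by ring_nf
      _ ≤ |(1 - (-t)) ^ (-(-(1/p))) - (1 + t/p)| + |t/p - p/4*ε^2| := abs_add_le _ _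
      _ ≤ C1 * |t|^2 + |t/p - p/4*ε^2| := by gcongr
  have h2nd : |t/p - p/4*ε^2| ≤ (K/p) * ε^4 := by
    have heq : t/p - p/4*ε^2 = (t - p^2/4*ε^2)/p := by field_simp
    rw [heq, abs_div, _root_.abs_of_pos hp]
    calc |t - p^2/4*ε^2|/p ≤ (K*ε^4)/p := by gcongr
      _ = (K/p)*ε^4 := by ring
  have h1st : C1 * |t|^2 ≤ C1 * M^2 * ε^4 := by
    have : |t|^2 ≤ (M*ε^2)^2 := by
      apply pow_le_pow_left₀ (abs_nonneg _) htM
    calc C1 * |t|^2 ≤ C1 * (M*ε^2)^2 := by gcongr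
      _ = C1 * M^2 * ε^4 := by ring
  have habs4 : |ε^4| = ε^4 := _root_.abs_of_pos (by positivity)
  rw [habs4]
  calc |(1 - (-t)) ^ (-(-(1/p))) - 1 - p/4 * ε^2|
      ≤ C1 * |t|^2 + |t/p - p/4*ε^2| := step
    _ ≤ C1 * M^2 * ε^4 + (K/p) * ε^4 := by gcongr
    _ = (C1 * M^2 + K/p) * ε^4 := by ring
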